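/- Let T_1, …, T_K with T_1 = {1}, T_i ⊆ {i−1, i} and |T_i| = 1 for each i, and let N_j = |{i : T_i = {j}}|. Then N_j ∈ {0,1,2} for all j, N_1 ≥ 1, Σ_j N_j = K, and between any two transmitters j < j' each carrying two messages (N_j = N_{j'} = 2), there exists k with j < k < j' and N_k = 0. -/

import Mathlib

/-- Properties of the load sequence `N j` of a cell-association assignment:
each `N j ≤ 2`, `N 1 ≥ 1`, `∑ j, N j = K`, and between any two transmitters each carrying
two messages there is a transmitter carrying none. -/
theorem stmt_7 (K : ℕ) (hK : 1 ≤ K) (T : ℕ → ℕ)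
    (hT1 : T 1 = 1)
    (hT : ∀ i, 2 ≤ i → i ≤ K → T i = i ∨ T i = i - 1)
    (N : ℕ → ℕ)
    (hN : ∀ j, N j = ((Finset.Icc 1 K).filter (fun i => T i = j)).card) :
    (∀ j, N j ≤ 2) ∧ 1 ≤ N 1 ∧ (∑ j ∈ Finset.Icc 1 K, N j) = K ∧
    (∀ j j', j < j' → N j = 2 → N j' = 2 →
      ∃ k, j < k ∧ k < j' ∧ N k = 0) := by
  -- fiber subset lemma
  have hsub : ∀ j, (Finset.Icc 1 K).filter (fun i => T i = j) ⊆ {j, j + 1} := by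
    intro j i hi
    simp only [Finset.mem_filter, Finset.mem_Icc] at hi
    obtain ⟨⟨h1, h2⟩, h3⟩ := hi
    simp only [Finset.mem_insert, Finset.mem_singleton]
    rcases Nat.lt_or_ge i 2 with h | h
    · interval_cases i
      left; omega
    · rcases hT i h h2 with h' | h' <;> omega
  have h2mem : ∀ j, N j = 2 → (1 ≤ j ∧ j + 1 ≤ K ∧ T j = j ∧ T (j + 1) = j) := by
    intro j hj
    have hcard : ({j, j + 1} : Finset ℕ).card ≤ 2 := by
      apply le_trans (Finset.card_insert_le _ _); simp
    have heq : (Finset.Icc 1 K).filter (fun i => T i = j) = {j, j + 1} := by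
      apply Finset.eq_of_subset_of_card_le (hsub j)
      rw [← hN j, hj]; exact hcard
    have hjmem : j ∈ (Finset.Icc 1 K).filter (fun i => T i = j) := by
      rw [heq]; simp
    have hj1mem : j + 1 ∈ (Finset.Icc 1 K).filter (fun i => T i = j) := by
      rw [heq]; simp
    simp only [Finset.mem_filter, Finset.mem_Icc] at hjmem hj1mem
    exact ⟨hjmem.1.1, hj1mem.1.2, hjmem.2, hj1mem.2⟩
  refine ⟨?_, ?_, ?_, ?_⟩
  · intro j
    rw [hN j]
    calc ((Finset.Icc 1 K).filter (fun i => T i = j)).card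
        ≤ ({j, j + 1} : Finset ℕ).card := Finset.card_le_card (hsub j)
      _ ≤ 2 := by apply le_trans (Finset.card_insert_le _ _); simp
  · rw [hN 1]
    apply Finset.card_pos.mpr
    exact ⟨1, by simp [hT1, hK]⟩
  · have := Finset.card_eq_sum_card_fiberwise (f := T) (s := Finset.Icc 1 K)
      (t := Finset.Icc 1 K) (by
        intro i hi
        simp only [Finset.coe_Icc, Set.mem_Icc] at hi ⊢
        rcases Nat.lt_or_ge i 2 with h | h
        · interval_cases i
          all_goals first | omega | (rw [hT1]; omega)
        · rcases hT i h hi.2 with h' | h' <;> omega)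
    rw [Nat.card_Icc] at this
    simp only [hN]
    omega
  · intro j j' hjj' hj2 hj'2
    obtain ⟨hj1, hjK, hTj, hTj1⟩ := h2mem j hj2
    obtain ⟨hj'1, hj'K, hTj', hTj'1⟩ := h2mem j' hj'2
    set S := (Finset.Ioc j j').filter (fun k => T k = k) with hS
    have hne : S.Nonempty := ⟨j', by simp [hS, hjj', hTj']⟩
    set k := S.min' hne with hk
    have hkS : k ∈ S := S.min'_mem hne
    simp only [hS, Finset.mem_filter, Finset.mem_Ioc] at hkS
    obtain ⟨⟨hjk, hkj'⟩, hTk⟩ := hkS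
    have hkne : k ≠ j + 1 := by
      intro h; rw [h] at hTk; omega
    have hk2 : j + 2 ≤ k := by omega
    have hTk1 : T (k - 1) ≠ k - 1 := by
      intro h
      have hmem : k - 1 ∈ S := by
        simp only [hS, Finset.mem_filter, Finset.mem_Ioc]
        exact ⟨⟨by omega, by omega⟩, h⟩
      have := S.min'_le _ hmem
      omega
    refine ⟨k - 1, by omega, by omega, ?_⟩
    rw [hN, Finset.card_eq_zero]
    apply Finset.eq_empty_of_forall_notMem
    intro i hi
    have hi' := hsub (k - 1) hi
    simp only [Finset.mem_insert, Finset.mem_singleton] at hi'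
    simp only [Finset.mem_filter, Finset.mem_Icc] at hi
    rcases hi' with h | h
    · exact hTk1 (h ▸ hi.2)
    · have hik : i = k := by omega
      rw [hik] at hi
      omega
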